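/- Let G be a metabelian group, let y be an element of the commutator subgroup [G,G], let x, z ∈ G, and let H be a subgroup of G. If y ∈ H, [y,x] ∈ H, and [y,z] ∈ H, then [[y,x],z] lies in dom_G^{𝒜²}(H). -/

import Mathlib

universe u v

open scoped commutatorElement

/-- The dominion of a subgroup `H` of `G` in the class of groups `P`. -/
def dominion {G : Type v} [Group G] (P : (K : Type u) → [Group K] → Prop)
    (H : Subgroup G) : Set G :=
  {a : G | ∀ (K : Type u) [Group K], P K → ∀ f g : G →* K,
    (∀ h ∈ H, f h = g h) → f a = g a}

/-- The commutator `[a,b] = a⁻¹b⁻¹ab`. -/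
def commElem {G : Type v} [Group G] (a b : G) : G := a⁻¹ * b⁻¹ * a * b

/-- The class `𝒜²` of metabelian groups: groups whose commutator subgroup is
abelian, i.e. whose second derived subgroup is trivial. -/
def Metabelian (K : Type u) [Group K] : Prop := derivedSeries K 2 = ⊥

lemma commElem_mem_commutator {K : Type u} [Group K] (a b : K) :
    commElem a b ∈ commutator K := by
  have h : commElem a b = ⁅a⁻¹, b⁻¹⁆ := by
    simp [commElem, commutatorElement_def]
  rw [h, commutator_def]
  exact Subgroup.commutator_mem_commutator (Subgroup.mem_top _) (Subgroup.mem_top _)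

lemma comm_of_metabelian {K : Type u} [Group K] (hK : derivedSeries K 2 = ⊥)
    {p q : K} (hp : p ∈ commutator K) (hq : q ∈ commutator K) : Commute p q := by
  have h1 : derivedSeries K 1 = commutator K := by
    rw [derivedSeries_succ, derivedSeries_zero, commutator_def]
  have h2 : ⁅p, q⁆ ∈ derivedSeries K 2 := by
    rw [derivedSeries_succ, h1]
    exact Subgroup.commutator_mem_commutator hp hq
  rw [hK, Subgroup.mem_bot] at h2
  exact commutatorElement_eq_one_iff_commute.mp h2

lemma commElem_eq_of_commute {K : Type u} [Group K] {u C C' : K}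
    (h : u * (C * C'⁻¹) = (C * C'⁻¹) * u) : commElem u C = commElem u C' := by
  have key : C⁻¹ * u * C = C'⁻¹ * u * C' := by
    calc C⁻¹ * u * C = C⁻¹ * (u * (C * C'⁻¹)) * C' := by group
      _ = C⁻¹ * ((C * C'⁻¹) * u) * C' := by rw [h]
      _ = C'⁻¹ * u * C' := by group
  calc commElem u C = u⁻¹ * (C⁻¹ * u * C) := by unfold commElem; group
    _ = u⁻¹ * (C'⁻¹ * u * C') := by rw [key]
    _ = commElem u C' := by unfold commElem; group

lemma key_swap {K : Type u} [Group K] (hK : derivedSeries K 2 = ⊥)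
    {Y : K} (hY : Y ∈ commutator K) (B C C' : K)
    (h : commElem Y C = commElem Y C') :
    commElem (commElem Y B) C = commElem (commElem Y B) C' := by
  have hconj : ∀ t : K, t⁻¹ * Y * t = Y * commElem Y t := by
    intro t; unfold commElem; group
  have hd : Y * (C * C'⁻¹) = (C * C'⁻¹) * Y := by
    calc Y * (C * C'⁻¹) = C * (C⁻¹ * Y * C) * C'⁻¹ := by group
      _ = C * (Y * commElem Y C) * C'⁻¹ := by rw [hconj]
      _ = C * (Y * commElem Y C') * C'⁻¹ := by rw [h]
      _ = C * (C'⁻¹ * Y * C') * C'⁻¹ := by rw [← hconj]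
      _ = (C * C'⁻¹) * Y := by group
  have hdC : Commute Y (C * C'⁻¹) := hd
  have hw : Commute Y (commElem (C * C'⁻¹) B⁻¹) :=
    comm_of_metabelian hK hY (commElem_mem_commutator _ _)
  have hBdB : B * (C * C'⁻¹) * B⁻¹ = (C * C'⁻¹) * commElem (C * C'⁻¹) B⁻¹ := by
    unfold commElem; group
  have hYBdB : Commute Y (B * (C * C'⁻¹) * B⁻¹) := by
    rw [hBdB]; exact hdC.mul_right hw
  have h2 : (B⁻¹ * Y * B) * (C * C'⁻¹) = (C * C'⁻¹) * (B⁻¹ * Y * B) := by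
    calc (B⁻¹ * Y * B) * (C * C'⁻¹)
        = B⁻¹ * (Y * (B * (C * C'⁻¹) * B⁻¹)) * B := by group
      _ = B⁻¹ * ((B * (C * C'⁻¹) * B⁻¹) * Y) * B := by rw [hYBdB.eq]
      _ = (C * C'⁻¹) * (B⁻¹ * Y * B) := by group
  apply commElem_eq_of_commute
  calc commElem Y B * (C * C'⁻¹)
      = Y⁻¹ * ((B⁻¹ * Y * B) * (C * C'⁻¹)) := by unfold commElem; group
    _ = Y⁻¹ * ((C * C'⁻¹) * (B⁻¹ * Y * B)) := by rw [h2]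
    _ = Y⁻¹ * (C * C'⁻¹) * (B⁻¹ * Y * B) := by group
    _ = (C * C'⁻¹) * Y⁻¹ * (B⁻¹ * Y * B) := by rw [hdC.inv_left.eq]
    _ = (C * C'⁻¹) * commElem Y B := by unfold commElem; group

/-- Let `G` be metabelian, `y` an element of the commutator subgroup of `G`,
`x, z ∈ G`, and `H ≤ G`.  If `y ∈ H`, `[y,x] ∈ H` and `[y,z] ∈ H`, then
`[[y,x],z]` lies in the `𝒜²`-dominion of `H` in `G`. -/
theorem comm_comm_mem_dominion {G : Type u} [Group G]
    (hG : derivedSeries G 2 = ⊥) (H : Subgroup G)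
    (y : G) (hyc : y ∈ commutator G) (x z : G)
    (hy : y ∈ H) (hyx : commElem y x ∈ H) (hyz : commElem y z ∈ H) :
    commElem (commElem y x) z ∈ dominion Metabelian H := by
  intro K _ hK f g hfg
  have hfy : f y = g y := hfg y hy
  have e1 : commElem (f y) (f x) = commElem (g y) (g x) := by
    simpa [commElem, map_mul, map_inv] using hfg _ hyx
  have e2 : commElem (f y) (f z) = commElem (g y) (g z) := by
    simpa [commElem, map_mul, map_inv] using hfg _ hyz
  have hY : f y ∈ commutator K := by
    rw [commutator_def]
    have hm : f y ∈ Subgroup.map f ⁅(⊤ : Subgroup G), ⊤⁆ :=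
      ⟨y, by rw [← commutator_def]; exact hyc, rfl⟩
    rw [Subgroup.map_commutator] at hm
    exact Subgroup.commutator_mono le_top le_top hm
  have main : commElem (commElem (f y) (f x)) (f z)
      = commElem (commElem (g y) (g x)) (g z) := by
    rw [key_swap hK hY (f x) (f z) (g z) (by rw [e2, hfy]), e1]
  simpa [commElem, map_mul, map_inv] using main
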